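/- Let {b_n}_{n≥1} be a nonnegative, non-increasing real sequence, let β ∈ L¹([0,T];ℝ₊), and let ψ:ℝ₊→ℝ₊ be a nondecreasing continuous function with ψ(x) ≤ k(1+x) for all x ≥ 0, where k > 0. For each n ≥ 1 let P_n be a probability measure on (Ω,F) equivalent to P, and let (u_n(t))_{t∈[0,T]} be a nonnegative (F_t)-progressively measurable process with E_{P_n}[sup_{t∈[0,T]} u_n(t)] < +∞ and such that for each t ∈ [0,T], u_n(t) ≤ b_n + E_{P_n}[∫_t^T β(s)ψ(u_n(s)) ds | F_t] holds P-almost surely. Then for each t ∈ [0,T], sup_{n≥1} u_n(t) ≤ (b₁ + k∫₀^T β(s) ds)·exp(k∫₀^T β(s) ds) P-almost surely. (Uniform bound (5) in the proof of Lemma 2.1.) -/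

import Mathlib

open MeasureTheory Set Filter Topology
open scoped ENNReal

noncomputable section

private lemma lint_Ici_eq_Ioi (ν : Measure ℝ) (hν : ∀ x : ℝ, ν {x} = 0)
    (g : ℝ → ℝ≥0∞) (r : ℝ) :
    ∫⁻ x in Ici r, g x ∂ν = ∫⁻ x in Ioi r, g x ∂ν := by
  have h : Ici r =ᵐ[ν] Ioi r := by
    rw [ae_eq_set]
    constructor
    · refine measure_mono_null (fun x hx => ?_) (hν r)
      have h1 : r ≤ x := hx.1
      have h2 : ¬ r < x := hx.2
      have : x = r := le_antisymm (not_lt.mp h2) h1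
      simp [this]
    · refine measure_mono_null (fun x hx => absurd (mem_Ici.mpr (le_of_lt hx.1)) hx.2) (hν r)
  rw [Measure.restrict_congr_set h]

private lemma meas_nu_Ioi (ν : Measure ℝ) : Measurable (fun x : ℝ => ν (Ioi x)) := by
  refine Antitone.measurable (fun a b hab => ?_)
  exact measure_mono (Ioi_subset_Ioi hab)

private lemma pow_identity (ν : Measure ℝ) [IsFiniteMeasure ν] (hν : ∀ x : ℝ, ν {x} = 0) :
    ∀ (j : ℕ) (s : ℝ),
      ((j : ℝ≥0∞) + 1) * ∫⁻ x in Ioi s, (ν (Ioi x)) ^ j ∂ν = (ν (Ioi s)) ^ (j + 1) := by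
  intro j
  induction j with
  | zero =>
    intro s
    simp
  | succ j ih =>
    intro s
    have hmeas : Measurable (fun x : ℝ => ν (Ioi x)) := meas_nu_Ioi ν
    have hmeasp : Measurable (fun x : ℝ => ν (Ioi x) ^ j) := hmeas.pow_const _
    -- (†): ν (Ioi s) * F j s = ∫⁻ r in Ioi s, F j r ∂ν + F (j+1) s
    -- where F i r := ∫⁻ x in Ioi r, ν (Ioi x) ^ i ∂ν
    have hsplit : ∀ x ∈ Ioi s, ν (Ioi s) = ν (Ioc s x) + ν (Ioi x) := by
      intro x hx
      rw [← Ioc_union_Ioi_eq_Ioi (le_of_lt hx),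
        measure_union (Ioc_disjoint_Ioi le_rfl) measurableSet_Ioi]
    have hKa : ∫⁻ x in Ioi s, ν (Ioi s) * ν (Ioi x) ^ j ∂ν
        = ν (Ioi s) * ∫⁻ x in Ioi s, ν (Ioi x) ^ j ∂ν :=
      lintegral_const_mul _ hmeasp
    have hmono : Monotone (fun x : ℝ => ν (Ioc s x)) := by
      intro a b hab
      exact measure_mono (Ioc_subset_Ioc le_rfl hab)
    have hKb : ∫⁻ x in Ioi s, ν (Ioi s) * ν (Ioi x) ^ j ∂ν
        = (∫⁻ x in Ioi s, ν (Ioc s x) * ν (Ioi x) ^ j ∂ν)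
          + ∫⁻ x in Ioi s, ν (Ioi x) ^ (j + 1) ∂ν := by
      rw [← lintegral_add_left (f := fun x => ν (Ioc s x) * ν (Ioi x) ^ j)
        (hmono.measurable.mul hmeasp)]
      refine setLIntegral_congr_fun measurableSet_Ioi (fun x hx => ?_)
      rw [hsplit x hx, add_mul, pow_succ, mul_comm (ν (Ioi x) ^ j) (ν (Ioi x))]
    -- swap for T1
    have hT1 : ∫⁻ x in Ioi s, ν (Ioc s x) * ν (Ioi x) ^ j ∂ν
        = ∫⁻ r in Ioi s, (∫⁻ x in Ioi r, ν (Ioi x) ^ j ∂ν) ∂ν := by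
      have step1 : ∫⁻ x in Ioi s, ν (Ioc s x) * ν (Ioi x) ^ j ∂ν
          = ∫⁻ x in Ioi s, (∫⁻ r, (Ioc s x).indicator (fun _ => ν (Ioi x) ^ j) r ∂ν) ∂ν := by
        refine setLIntegral_congr_fun measurableSet_Ioi (fun x _ => ?_)
        rw [lintegral_indicator measurableSet_Ioc, setLIntegral_const, mul_comm]
      rw [step1]
      have hswap := lintegral_lintegral_swap (μ := ν.restrict (Ioi s)) (ν := ν)
        (f := fun x r => (Ioc s x).indicator (fun _ => ν (Ioi x) ^ j) r) ?hmeas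
      case hmeas =>
        have : (Function.uncurry fun x r => (Ioc s x).indicator (fun _ => ν (Ioi x) ^ j) r)
            = {p : ℝ × ℝ | s < p.2 ∧ p.2 ≤ p.1}.indicator (fun p => ν (Ioi p.1) ^ j) := by
          funext p
          rcases p with ⟨x, r⟩
          simp only [Function.uncurry, Set.indicator, mem_Ioc, mem_setOf_eq]
        rw [this]
        exact ((hmeasp.comp measurable_fst).indicator
          ((measurableSet_lt measurable_const measurable_snd).inter
            (measurableSet_le measurable_snd measurable_fst))).aemeasurable
      rw [hswap]
      -- now : ∫⁻ r ∂ν, ∫⁻ x in Ioi s, indicator ... = ∫⁻ r in Ioi s, F j r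
      have hinner : ∀ r : ℝ, (∫⁻ x in Ioi s, (Ioc s x).indicator (fun _ => ν (Ioi x) ^ j) r ∂ν)
          = (Ioi s).indicator (fun r => ∫⁻ x in Ici r, ν (Ioi x) ^ j ∂ν) r := by
        intro r
        by_cases hr : r ∈ Ioi s
        · rw [Set.indicator_of_mem hr]
          have hfun : ∀ x : ℝ, (Ioc s x).indicator (fun _ => ν (Ioi x) ^ j) r
              = (Ici r).indicator (fun x => ν (Ioi x) ^ j) x := by
            intro x
            by_cases hx : x ∈ Ici r
            · rw [Set.indicator_of_mem (mem_Ioc.mpr ⟨hr, hx⟩), Set.indicator_of_mem hx]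
            · rw [Set.indicator_of_notMem (fun hmem => hx (mem_Ioc.mp hmem).2),
                Set.indicator_of_notMem hx]
          rw [lintegral_congr hfun, lintegral_indicator measurableSet_Ici,
            Measure.restrict_restrict measurableSet_Ici]
          rw [(inter_eq_self_of_subset_left (Ici_subset_Ioi.mpr hr) :
            Ici r ∩ Ioi s = Ici r)]
        · rw [Set.indicator_of_notMem hr]
          have : ∀ x : ℝ, (Ioc s x).indicator (fun _ => ν (Ioi x) ^ j) r = 0 := by
            intro x
            exact Set.indicator_of_notMem (fun hmem => hr (mem_Ioc.mp hmem).1) _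
          simp [this]
      calc ∫⁻ r, (∫⁻ x in Ioi s, (Ioc s x).indicator (fun _ => ν (Ioi x) ^ j) r ∂ν) ∂ν
          = ∫⁻ r, (Ioi s).indicator (fun r => ∫⁻ x in Ici r, ν (Ioi x) ^ j ∂ν) r ∂ν := by
            exact lintegral_congr hinner
        _ = ∫⁻ r in Ioi s, (∫⁻ x in Ici r, ν (Ioi x) ^ j ∂ν) ∂ν := by
            rw [lintegral_indicator measurableSet_Ioi]
        _ = ∫⁻ r in Ioi s, (∫⁻ x in Ioi r, ν (Ioi x) ^ j ∂ν) ∂ν := by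
            refine setLIntegral_congr_fun measurableSet_Ioi (fun r _ => ?_)
            exact lint_Ici_eq_Ioi ν hν _ r
    -- multiply (†) by (j+1) and use ih
    have hFmeas : Measurable (fun r : ℝ => ∫⁻ x in Ioi r, ν (Ioi x) ^ j ∂ν) := by
      refine Antitone.measurable (fun a b hab => ?_)
      exact lintegral_mono' (Measure.restrict_mono (Ioi_subset_Ioi hab) le_rfl) le_rfl
    have hdagger : ν (Ioi s) * ∫⁻ x in Ioi s, ν (Ioi x) ^ j ∂ν
        = (∫⁻ r in Ioi s, (∫⁻ x in Ioi r, ν (Ioi x) ^ j ∂ν) ∂ν)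
          + ∫⁻ x in Ioi s, ν (Ioi x) ^ (j + 1) ∂ν := by
      rw [← hKa, hKb, hT1]
    have hmul : ((j : ℝ≥0∞) + 1) * (ν (Ioi s) * ∫⁻ x in Ioi s, ν (Ioi x) ^ j ∂ν)
        = ν (Ioi s) ^ (j + 2) := by
      rw [mul_comm (ν (Ioi s)) _, ← mul_assoc, ih s, ← pow_succ]
    have hmul2 : ((j : ℝ≥0∞) + 1) * ∫⁻ r in Ioi s, (∫⁻ x in Ioi r, ν (Ioi x) ^ j ∂ν) ∂ν
        = ∫⁻ x in Ioi s, ν (Ioi x) ^ (j + 1) ∂ν := by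
      rw [← lintegral_const_mul _ hFmeas]
      refine setLIntegral_congr_fun measurableSet_Ioi (fun r _ => ?_)
      exact ih r
    have : ((j : ℝ≥0∞) + 1) * (ν (Ioi s) * ∫⁻ x in Ioi s, ν (Ioi x) ^ j ∂ν)
        = (((j : ℝ≥0∞) + 1) + 1) * ∫⁻ x in Ioi s, ν (Ioi x) ^ (j + 1) ∂ν := by
      rw [hdagger, mul_add, hmul2, add_mul, one_mul]
      ring
    rw [show ((j : ℕ) + 1 : ℕ) = j + 1 from rfl]
    push_cast
    calc ((j : ℝ≥0∞) + 1 + 1) * ∫⁻ x in Ioi s, ν (Ioi x) ^ (j + 1) ∂ν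
        = ((j : ℝ≥0∞) + 1) * (ν (Ioi s) * ∫⁻ x in Ioi s, ν (Ioi x) ^ j ∂ν) := this.symm
      _ = ν (Ioi s) ^ (j + 2) := hmul
      _ = ν (Ioi s) ^ (j + 1 + 1) := by ring


private lemma fact_ne_zero' (i : ℕ) : ((i.factorial : ℝ≥0∞)) ≠ 0 := by
  exact_mod_cast Nat.cast_ne_zero.mpr (Nat.factorial_ne_zero i)

private lemma fact_ne_top' (i : ℕ) : ((i.factorial : ℝ≥0∞)) ≠ ⊤ := ENNReal.natCast_ne_top _

private lemma pow_identity' (ν : Measure ℝ) [IsFiniteMeasure ν] (hν : ∀ x : ℝ, ν {x} = 0)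
    (hpi : ∀ (j : ℕ) (s : ℝ),
      ((j : ℝ≥0∞) + 1) * ∫⁻ x in Ioi s, (ν (Ioi x)) ^ j ∂ν = (ν (Ioi s)) ^ (j + 1))
    (j : ℕ) (s : ℝ) :
    ∫⁻ x in Ioi s, (ν (Ioi x)) ^ j ∂ν = (ν (Ioi s)) ^ (j + 1) / ((j : ℝ≥0∞) + 1) := by
  refine (ENNReal.eq_div_iff (by simp) (by simp [ENNReal.natCast_ne_top])).mpr (hpi j s)

private lemma gronwall_iter (ν : Measure ℝ) [IsFiniteMeasure ν] (hν : ∀ x : ℝ, ν {x} = 0)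
    (E : Set ℝ) (hE : ν Eᶜ = 0) (t : ℝ)
    (z : ℝ → ℝ≥0∞) (hz : Measurable z) (Mz c ke : ℝ≥0∞)
    (hbd : ∀ s, t ≤ s → s ∈ E → z s ≤ Mz)
    (hrec : ∀ s, t ≤ s → s ∈ E → z s ≤ c + ke * ∫⁻ r in Ioi s, z r ∂ν) :
    ∀ (m : ℕ), ∀ s, t ≤ s → s ∈ E →
      z s ≤ c * (∑ j ∈ Finset.range m, ke ^ j * ν (Ioi s) ^ j / (j.factorial : ℝ≥0∞))
          + Mz * ke ^ m * ν (Ioi s) ^ m / (m.factorial : ℝ≥0∞) := by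
  intro m
  induction m with
  | zero =>
    intro s hts hsE
    simpa using hbd s hts hsE
  | succ m ih =>
    intro s hts hsE
    have hmeasIoi : Measurable (fun x : ℝ => ν (Ioi x)) :=
      Antitone.measurable (fun a b hab => measure_mono (Ioi_subset_Ioi hab))
    -- bound the inner integral using ih
    have hstep : ∫⁻ r in Ioi s, z r ∂ν
        ≤ ∫⁻ r in Ioi s,
            (c * (∑ j ∈ Finset.range m, ke ^ j * ν (Ioi r) ^ j / (j.factorial : ℝ≥0∞))
              + Mz * ke ^ m * ν (Ioi r) ^ m / (m.factorial : ℝ≥0∞)) ∂ν := by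
      refine lintegral_mono_ae ?_
      have hEa : ∀ᵐ r ∂(ν.restrict (Ioi s)), r ∈ E := by
        refine ae_restrict_of_ae ?_
        rw [ae_iff]
        exact measure_mono_null (fun x hx => by simpa using hx) hE
      filter_upwards [hEa, ae_restrict_mem measurableSet_Ioi] with r hrE hrs
      exact ih r (le_trans hts (le_of_lt hrs)) hrE
    -- compute the right side integral
    have hcalc : ∫⁻ r in Ioi s,
        (c * (∑ j ∈ Finset.range m, ke ^ j * ν (Ioi r) ^ j / (j.factorial : ℝ≥0∞))
          + Mz * ke ^ m * ν (Ioi r) ^ m / (m.factorial : ℝ≥0∞)) ∂ν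
        = (∑ j ∈ Finset.range m,
            c * ke ^ j / (j.factorial : ℝ≥0∞) * (ν (Ioi s) ^ (j + 1) / ((j : ℝ≥0∞) + 1)))
          + Mz * ke ^ m / (m.factorial : ℝ≥0∞) * (ν (Ioi s) ^ (m + 1) / ((m : ℝ≥0∞) + 1)) := by
      have hrew : ∀ r : ℝ,
          c * (∑ j ∈ Finset.range m, ke ^ j * ν (Ioi r) ^ j / (j.factorial : ℝ≥0∞))
            + Mz * ke ^ m * ν (Ioi r) ^ m / (m.factorial : ℝ≥0∞)
          = (∑ j ∈ Finset.range m,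
              (c * ke ^ j / (j.factorial : ℝ≥0∞)) * ν (Ioi r) ^ j)
            + (Mz * ke ^ m / (m.factorial : ℝ≥0∞)) * ν (Ioi r) ^ m := by
        intro r
        rw [Finset.mul_sum]
        congr 1
        · refine Finset.sum_congr rfl (fun j _ => ?_)
          simp only [div_eq_mul_inv]
          ring
        · simp only [div_eq_mul_inv]
          ring
      simp only [hrew]
      rw [lintegral_add_right _ ((hmeasIoi.pow_const m).const_mul _)]
      rw [lintegral_finset_sum _ (fun j _ => (hmeasIoi.pow_const j).const_mul _)]
      congr 1
      · refine Finset.sum_congr rfl (fun j _ => ?_)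
        rw [lintegral_const_mul _ (hmeasIoi.pow_const j),
          pow_identity' ν hν (fun j s => pow_identity ν hν j s) j s]
      · rw [lintegral_const_mul _ (hmeasIoi.pow_const m),
          pow_identity' ν hν (fun j s => pow_identity ν hν j s) m s]
    have hfact : ∀ j : ℕ, (((j + 1).factorial : ℝ≥0∞))⁻¹
        = ((j : ℝ≥0∞) + 1)⁻¹ * ((j.factorial : ℝ≥0∞))⁻¹ := by
      intro j
      have hcast : (((j + 1).factorial : ℕ) : ℝ≥0∞)
          = (((j : ℕ) + 1 : ℕ) : ℝ≥0∞) * ((j.factorial : ℕ) : ℝ≥0∞) := by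
        rw [Nat.factorial_succ]
        push_cast
        ring
      rw [hcast, ENNReal.mul_inv (Or.inl (by exact_mod_cast Nat.succ_ne_zero j))
        (Or.inl (ENNReal.natCast_ne_top _))]
      congr 2
      push_cast
      ring
    have hterm : ∀ j : ℕ,
        ke * (c * ke ^ j / (j.factorial : ℝ≥0∞) * (ν (Ioi s) ^ (j + 1) / ((j : ℝ≥0∞) + 1)))
        = c * (ke ^ (j + 1) * ν (Ioi s) ^ (j + 1) / ((j + 1).factorial : ℝ≥0∞)) := by
      intro j
      simp only [div_eq_mul_inv]
      rw [hfact j, pow_succ]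
      ring
    have hterm2 :
        ke * (Mz * ke ^ m / (m.factorial : ℝ≥0∞) * (ν (Ioi s) ^ (m + 1) / ((m : ℝ≥0∞) + 1)))
        = Mz * ke ^ (m + 1) * ν (Ioi s) ^ (m + 1) / ((m + 1).factorial : ℝ≥0∞) := by
      simp only [div_eq_mul_inv]
      rw [hfact m, pow_succ]
      ring
    refine (hrec s hts hsE).trans ?_
    have h2 : ke * ∫⁻ r in Ioi s, z r ∂ν
        ≤ ke * ((∑ j ∈ Finset.range m,
            c * ke ^ j / (j.factorial : ℝ≥0∞) * (ν (Ioi s) ^ (j + 1) / ((j : ℝ≥0∞) + 1)))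
          + Mz * ke ^ m / (m.factorial : ℝ≥0∞) * (ν (Ioi s) ^ (m + 1) / ((m : ℝ≥0∞) + 1))) :=
      mul_le_mul_right (hstep.trans (le_of_eq hcalc)) _
    refine (add_le_add_right h2 c).trans (le_of_eq ?_)
    rw [mul_add, Finset.mul_sum]
    have hsum1 : ∑ j ∈ Finset.range m,
        ke * (c * ke ^ j / (j.factorial : ℝ≥0∞) * (ν (Ioi s) ^ (j + 1) / ((j : ℝ≥0∞) + 1)))
        = ∑ j ∈ Finset.range m,
          c * (ke ^ (j + 1) * ν (Ioi s) ^ (j + 1) / ((j + 1).factorial : ℝ≥0∞)) :=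
      Finset.sum_congr rfl (fun j _ => hterm j)
    rw [hsum1, hterm2, Finset.sum_range_succ']
    simp only [pow_zero, Nat.factorial_zero, Nat.cast_one, one_mul]
    rw [show (1 : ℝ≥0∞) / 1 = 1 by simp, mul_add, mul_one, Finset.mul_sum]
    ring

private lemma ofReal_int_le {α : Type*} [MeasurableSpace α] (μ : Measure α) (f : α → ℝ)
    (hf : 0 ≤ᵐ[μ] f) :
    ENNReal.ofReal (∫ x, f x ∂μ) ≤ ∫⁻ x, ENNReal.ofReal (f x) ∂μ := by
  by_cases hfi : Integrable f μ
  · exact le_of_eq (ofReal_integral_eq_lintegral_ofReal hfi hf)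
  · rw [integral_undef hfi]
    simp

/-- The time interval `[0,T]`, where `0 < T ≤ +∞` is an extended real
(understood as `[0,+∞)` when `T = +∞`). -/
def timeSet (T : EReal) : Set ℝ := {s : ℝ | 0 ≤ s ∧ (s : EReal) ≤ T}

/-- **Uniform bound (5) in the proof of Lemma 2.1.** Under the hypotheses of Lemma 2.1
(without the Osgood condition and without `b_n → 0`), one has, for each `t ∈ [0,T]`,
`sup_{n ≥ 1} u_n(t) ≤ (b₁ + k ∫₀^T β(s) ds) · exp(k ∫₀^T β(s) ds)` `P`-a.s. -/
theorem lemma_2_1_uniform_bound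
    {Ω : Type*} {m0 : MeasurableSpace Ω} (P : Measure Ω) [IsProbabilityMeasure P]
    (hPcomplete : P.IsComplete)
    (ℱ : Filtration ℝ m0)
    (T : EReal) (hT : 0 < T)
    (b : ℕ → ℝ)
    (hb_nonneg : ∀ n, 1 ≤ n → 0 ≤ b n)
    (hb_antitone : ∀ n, 1 ≤ n → b (n + 1) ≤ b n)
    (β : ℝ → ℝ)
    (hβ_nonneg : ∀ s ∈ timeSet T, 0 ≤ β s)
    (hβ_int : IntegrableOn β (timeSet T))
    (ψ : ℝ → ℝ) (k : ℝ) (hk : 0 < k)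
    (hψ_nonneg : ∀ x, 0 ≤ x → 0 ≤ ψ x)
    (hψ_mono : MonotoneOn ψ (Ici 0))
    (hψ_cont : ContinuousOn ψ (Ici 0))
    (hψ_growth : ∀ x, 0 ≤ x → ψ x ≤ k * (1 + x))
    (Pn : ℕ → Measure Ω)
    (hPn_prob : ∀ n, IsProbabilityMeasure (Pn n))
    (hPn_equiv : ∀ n, Pn n ≪ P ∧ P ≪ Pn n)
    (u : ℕ → ℝ → Ω → ℝ)
    (hu_nonneg : ∀ n t ω, 0 ≤ u n t ω)
    (hu_prog : ∀ n, ProgMeasurable ℱ (fun t ω => u n t ω))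
    (hu_sup : ∀ n, 1 ≤ n →
      ∫⁻ ω, (⨆ t ∈ timeSet T, ENNReal.ofReal (u n t ω)) ∂(Pn n) < ⊤)
    (hmain : ∀ n, 1 ≤ n → ∀ t ∈ timeSet T, ∀ᵐ ω ∂P,
      u n t ω ≤ b n +
        ((Pn n)[fun ω' => ∫ s in Ioi t ∩ timeSet T, β s * ψ (u n s ω') | ℱ t]) ω) :
    ∀ t ∈ timeSet T, ∀ᵐ ω ∂P, ∀ n, 1 ≤ n →
      u n t ω ≤ (b 1 + k * ∫ s in timeSet T, β s) *
        Real.exp (k * ∫ s in timeSet T, β s) := by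
  classical
  have hb_le : ∀ n, 1 ≤ n → b n ≤ b 1 := by
    intro n hn
    induction n with
    | zero => omega
    | succ m ih =>
      rcases Nat.eq_zero_or_pos m with hm | hm
      · subst hm; exact le_rfl
      · exact (hb_antitone m hm).trans (ih hm)
  have hEmeas : MeasurableSet (timeSet T) := by
    have h : timeSet T = Ici (0 : ℝ) ∩ ((↑) : ℝ → EReal) ⁻¹' (Iic T) := by
      ext s
      simp [timeSet, mem_setOf_eq, mem_Ici, mem_preimage, mem_Iic]
    rw [h]
    exact measurableSet_Ici.inter (measurable_coe_real_ereal measurableSet_Iic)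
  obtain ⟨β₀, hβ₀meas, hββ₀⟩ := hβ_int.aestronglyMeasurable
  set β' : ℝ → ℝ := fun r => max (β₀ r) 0 with hβ'def
  have hβ'meas : Measurable β' := hβ₀meas.measurable.max measurable_const
  have hβ'nonneg : ∀ r, 0 ≤ β' r := fun r => le_max_right _ _
  have hββ' : β =ᵐ[volume.restrict (timeSet T)] β' := by
    filter_upwards [hββ₀, ae_restrict_mem hEmeas] with r h1 h2
    rw [hβ'def]
    simp only
    rw [← h1, max_eq_left (hβ_nonneg r h2)]
  have hβ'int : IntegrableOn β' (timeSet T) := hβ_int.congr hββ'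
  set B : ℝ := ∫ s in timeSet T, β s with hBdef
  have hβae_nonneg : 0 ≤ᵐ[volume.restrict (timeSet T)] β := by
    filter_upwards [ae_restrict_mem hEmeas] with r hr using hβ_nonneg r hr
  have hB_nonneg : 0 ≤ B := integral_nonneg_of_ae hβae_nonneg
  set ν : Measure ℝ :=
    (volume.restrict (timeSet T)).withDensity (fun r => ENNReal.ofReal (β' r)) with hνdef
  have hν_apply : ∀ s : Set ℝ, MeasurableSet s →
      ν s = ∫⁻ r in s ∩ timeSet T, ENNReal.ofReal (β' r) ∂volume := by
    intro s hs
    rw [hνdef, withDensity_apply _ hs, Measure.restrict_restrict hs]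
  have hν_univ : ν univ = ENNReal.ofReal B := by
    rw [hν_apply univ MeasurableSet.univ, univ_inter]
    have h1 : ∫⁻ r in timeSet T, ENNReal.ofReal (β' r) ∂volume
        = ∫⁻ r in timeSet T, ENNReal.ofReal (β r) ∂volume := by
      refine lintegral_congr_ae ?_
      filter_upwards [hββ'] with r hr
      rw [hr]
    rw [h1, ← ofReal_integral_eq_lintegral_ofReal hβ_int hβae_nonneg]
  haveI hνfin : IsFiniteMeasure ν := ⟨by rw [hν_univ]; exact ENNReal.ofReal_lt_top⟩
  have hν_atom : ∀ x : ℝ, ν {x} = 0 := by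
    intro x
    rw [hν_apply _ (measurableSet_singleton x)]
    refine setLIntegral_measure_zero _ _ (measure_mono_null inter_subset_left ?_)
    exact measure_singleton x
  have hν_E : ν (timeSet T)ᶜ = 0 := by
    rw [hν_apply _ hEmeas.compl, compl_inter_self]
    simp
  have hν_le : ∀ s : ℝ, ν (Ioi s) ≤ ENNReal.ofReal B := by
    intro s
    rw [← hν_univ]
    exact measure_mono (subset_univ _)
  have hwd : ∀ (s : ℝ) (g : ℝ → ℝ≥0∞), Measurable g →
      ∫⁻ r in Ioi s, g r ∂ν
        = ∫⁻ r in Ioi s ∩ timeSet T, ENNReal.ofReal (β' r) * g r ∂volume := by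
    intro s g hg
    rw [hνdef, restrict_withDensity measurableSet_Ioi,
      lintegral_withDensity_eq_lintegral_mul _ (hβ'meas.ennreal_ofReal) hg,
      Measure.restrict_restrict measurableSet_Ioi]
    rfl
  intro t ht
  have key : ∀ n, 1 ≤ n → ∀ᵐ ω ∂P, u n t ω ≤ (b 1 + k * B) * Real.exp (k * B) := by
    intro n hn
    haveI hQprob : IsProbabilityMeasure (Pn n) := hPn_prob n
    set Q := Pn n with hQdef
    set M_e : ℝ≥0∞ := ∫⁻ ω, (⨆ s ∈ timeSet T, ENNReal.ofReal (u n s ω)) ∂Q with hMdef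
    have hM_lt : M_e < ⊤ := hu_sup n hn
    have hXle : ∀ s ∈ timeSet T, ∫⁻ ω, ENNReal.ofReal (u n s ω) ∂Q ≤ M_e := by
      intro s hs
      refine lintegral_mono (fun ω => ?_)
      exact le_biSup (fun s => ENNReal.ofReal (u n s ω)) hs
    -- joint strong measurability of (s, ω) ↦ u n s ω
    have hw : ∀ i : ℕ, StronglyMeasurable (fun p : ℝ × Ω => u n (min p.1 (i : ℝ)) p.2) := by
      intro i
      have h1 := hu_prog n (i : ℝ)
      have h2 : (Subtype.instMeasurableSpace.prod (ℱ (i : ℝ)) :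
            MeasurableSpace (Set.Iic (i : ℝ) × Ω))
          ≤ Subtype.instMeasurableSpace.prod m0 :=
        sup_le_sup le_rfl (MeasurableSpace.comap_mono (ℱ.le (i : ℝ)))
      have h3 := h1.mono h2
      have hφ : Measurable (fun p : ℝ × Ω =>
          ((⟨min p.1 (i : ℝ), mem_Iic.mpr (min_le_right _ _)⟩ : Set.Iic (i : ℝ)), p.2)) :=
        ((measurable_fst.min measurable_const).subtype_mk).prodMk measurable_snd
      exact h3.comp_measurable hφ
    have hU : StronglyMeasurable (fun p : ℝ × Ω => u n p.1 p.2) := by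
      refine stronglyMeasurable_of_tendsto atTop hw ?_
      rw [tendsto_pi_nhds]
      intro p
      refine tendsto_atTop_of_eventually_const (i₀ := ⌈p.1⌉₊) (fun i hi => ?_)
      have : min p.1 (i : ℝ) = p.1 :=
        min_eq_left ((Nat.le_ceil p.1).trans (Nat.cast_le.mpr hi))
      rw [this]
    set ψt : ℝ → ℝ := fun x => ψ (max x 0) with hψtdef
    have hψt_cont : Continuous ψt :=
      hψ_cont.comp_continuous (continuous_id.max continuous_const)
        (fun x => mem_Ici.mpr (le_max_right _ _))
    have hψt_eq : ∀ x : ℝ, 0 ≤ x → ψt x = ψ x := by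
      intro x hx
      rw [hψtdef]
      simp only
      rw [max_eq_left hx]
    set G : ℝ × Ω → ℝ := fun p => β' p.1 * ψt (u n p.1 p.2) with hGdef
    have hG_meas : Measurable G :=
      (hβ'meas.comp measurable_fst).mul (hψt_cont.measurable.comp hU.measurable)
    have hG_nonneg : ∀ p, 0 ≤ G p := fun p =>
      mul_nonneg (hβ'nonneg _) (hψ_nonneg _ (le_max_right _ _))
    have hG_le : ∀ p : ℝ × Ω, G p ≤ β' p.1 * (k * (1 + u n p.1 p.2)) := by
      intro p
      refine mul_le_mul_of_nonneg_left ?_ (hβ'nonneg _)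
      rw [hψt_eq _ (hu_nonneg _ _ _)]
      exact hψ_growth _ (hu_nonneg _ _ _)
    have hZeq : ∀ (s : ℝ) (ω : Ω),
        (∫ r in Ioi s ∩ timeSet T, β r * ψ (u n r ω)) =
          ∫ r in Ioi s ∩ timeSet T, G (r, ω) := by
      intro s ω
      refine integral_congr_ae ?_
      have h1 : β =ᵐ[volume.restrict (Ioi s ∩ timeSet T)] β' :=
        ae_restrict_of_ae_restrict_of_subset inter_subset_right hββ'
      filter_upwards [h1] with r hr
      rw [hGdef]
      simp only
      rw [hr, hψt_eq _ (hu_nonneg _ _ _)]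
    have hG_ofReal_le : ∀ p : ℝ × Ω, ENNReal.ofReal (G p)
        ≤ ENNReal.ofReal (β' p.1) * (ENNReal.ofReal k * (1 + ENNReal.ofReal (u n p.1 p.2))) := by
      intro p
      refine le_trans (ENNReal.ofReal_le_ofReal (hG_le p)) ?_
      rw [ENNReal.ofReal_mul (hβ'nonneg _), ENNReal.ofReal_mul (le_of_lt hk)]
      refine mul_le_mul_right (mul_le_mul_right (le_of_eq ?_) _) _
      rw [ENNReal.ofReal_add zero_le_one (hu_nonneg _ _ _), ENNReal.ofReal_one]
    -- integrability of u n s under Q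
    have hXint : ∀ s ∈ timeSet T, Integrable (u n s) Q := by
      intro s hs
      refine ⟨((IsStronglyProgressive.stronglyAdapted (hu_prog n) s).mono (ℱ.le s)).aestronglyMeasurable, ?_⟩
      rw [hasFiniteIntegral_iff_ofReal (ae_of_all _ (hu_nonneg n s))]
      exact lt_of_le_of_lt (hXle s hs) hM_lt
    -- integrability of Zs
    have hZint : ∀ s : ℝ,
        Integrable (fun ω => ∫ r in Ioi s ∩ timeSet T, β r * ψ (u n r ω)) Q := by
      intro s
      have hfuneq : (fun ω => ∫ r in Ioi s ∩ timeSet T, β r * ψ (u n r ω))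
          = fun ω => ∫ r in Ioi s ∩ timeSet T, G (r, ω) := funext (hZeq s)
      rw [hfuneq]
      refine ⟨(hG_meas.stronglyMeasurable.integral_prod_left').aestronglyMeasurable, ?_⟩
      have hnn : ∀ ω, 0 ≤ ∫ r in Ioi s ∩ timeSet T, G (r, ω) := fun ω =>
        integral_nonneg (fun r => hG_nonneg _)
      rw [hasFiniteIntegral_iff_ofReal (ae_of_all _ hnn)]
      have h1 : ∀ ω, ENNReal.ofReal (∫ r in Ioi s ∩ timeSet T, G (r, ω))
          ≤ ∫⁻ r in Ioi s ∩ timeSet T, ENNReal.ofReal (G (r, ω)) ∂volume := fun ω =>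
        ofReal_int_le _ _ (ae_of_all _ (fun r => hG_nonneg _))
      refine lt_of_le_of_lt (lintegral_mono h1) ?_
      have hswap : ∫⁻ ω, (∫⁻ r in Ioi s ∩ timeSet T, ENNReal.ofReal (G (r, ω)) ∂volume) ∂Q
          = ∫⁻ r in Ioi s ∩ timeSet T, (∫⁻ ω, ENNReal.ofReal (G (r, ω)) ∂Q) ∂volume := by
        refine lintegral_lintegral_swap ?_
        exact ((ENNReal.measurable_ofReal.comp hG_meas).comp measurable_swap).aemeasurable
      rw [hswap]
      have h2 : ∀ r ∈ Ioi s ∩ timeSet T, (∫⁻ ω, ENNReal.ofReal (G (r, ω)) ∂Q)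
          ≤ ENNReal.ofReal (β' r) * (ENNReal.ofReal k * (1 + M_e)) := by
        intro r hr
        have h3 : (∫⁻ ω, ENNReal.ofReal (G (r, ω)) ∂Q)
            ≤ ∫⁻ ω, ENNReal.ofReal (β' r) *
                (ENNReal.ofReal k * (1 + ENNReal.ofReal (u n r ω))) ∂Q :=
          lintegral_mono (fun ω => hG_ofReal_le (r, ω))
        refine h3.trans ?_
        have hgm : Measurable (fun ω : Ω => ENNReal.ofReal (u n r ω)) :=
          (hU.measurable.comp measurable_prodMk_left).ennreal_ofReal
        rw [lintegral_const_mul _ ((hgm.const_add 1).const_mul _),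
          lintegral_const_mul _ (hgm.const_add 1)]
        refine mul_le_mul_right (mul_le_mul_right ?_ _) _
        rw [lintegral_add_left measurable_const, lintegral_one, measure_univ]
        refine add_le_add_right ?_ 1
        exact hXle r hr.2
      have h4 : ∫⁻ r in Ioi s ∩ timeSet T, (∫⁻ ω, ENNReal.ofReal (G (r, ω)) ∂Q) ∂volume
          ≤ ∫⁻ r in Ioi s ∩ timeSet T,
              ENNReal.ofReal (β' r) * (ENNReal.ofReal k * (1 + M_e)) ∂volume := by
        refine lintegral_mono_ae ?_
        filter_upwards [ae_restrict_mem (measurableSet_Ioi.inter hEmeas)] with r hr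
        exact h2 r hr
      refine lt_of_le_of_lt h4 ?_
      rw [lintegral_mul_const _ hβ'meas.ennreal_ofReal, ← hν_apply (Ioi s) measurableSet_Ioi]
      refine ENNReal.mul_lt_top ((hν_le s).trans_lt ENNReal.ofReal_lt_top) ?_
      exact ENNReal.mul_lt_top ENNReal.ofReal_lt_top
        (ENNReal.add_lt_top.mpr ⟨ENNReal.one_lt_top, hM_lt⟩)
    -- the exceptional set A
    set tgt : ℝ := (b 1 + k * B) * Real.exp (k * B) with htgtdef
    set A : Set Ω := {ω | tgt < u n t ω} with hAdef
    have hA_F : MeasurableSet[ℱ t] A := by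
      have hSM : StronglyMeasurable[ℱ t] (u n t) := IsStronglyProgressive.stronglyAdapted (hu_prog n) t
      have hAspec : A = (u n t) ⁻¹' (Ioi tgt) := by
        ext ω
        simp [hAdef, mem_preimage]
      rw [hAspec]
      exact hSM.measurable measurableSet_Ioi
    have hA : MeasurableSet A := ℱ.le t _ hA_F
    set z : ℝ → ℝ≥0∞ := fun s => ∫⁻ ω in A, ENNReal.ofReal (u n s ω) ∂Q with hzdef
    have hz_meas : Measurable z := by
      refine Measurable.lintegral_prod_right (ν := Q.restrict A)
        (f := fun s ω => ENNReal.ofReal (u n s ω)) ?_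
      exact hU.measurable.ennreal_ofReal
    have hz_le : ∀ s ∈ timeSet T, z s ≤ M_e := by
      intro s hs
      refine le_trans (lintegral_mono' Measure.restrict_le_self le_rfl) (hXle s hs)
    set k_e : ℝ≥0∞ := ENNReal.ofReal k with hkedef
    set c_e : ℝ≥0∞ := (ENNReal.ofReal (b n) + k_e * ENNReal.ofReal B) * Q A with hcedef
    -- the recursion inequality
    have hrec : ∀ s, t ≤ s → s ∈ timeSet T →
        z s ≤ c_e + k_e * ∫⁻ r in Ioi s, z r ∂ν := by
      intro s hts hs
      have R1 : ∀ᵐ ω ∂Q, u n s ω ≤ b n +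
          (Q[fun ω' => ∫ r in Ioi s ∩ timeSet T, β r * ψ (u n r ω') | ℱ s]) ω :=
        (hmain n hn s hs).filter_mono ((hPn_equiv n).1.ae_le)
      have R2 : ∫ ω in A, u n s ω ∂Q ≤ b n * (Q A).toReal
          + ∫ ω in A, (∫ r in Ioi s ∩ timeSet T, β r * ψ (u n r ω)) ∂Q := by
        have h1 : ∫ ω in A, u n s ω ∂Q ≤ ∫ ω in A, (b n +
            (Q[fun ω' => ∫ r in Ioi s ∩ timeSet T, β r * ψ (u n r ω') | ℱ s]) ω) ∂Q := by
          refine integral_mono_ae ((hXint s hs).integrableOn)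
            (((integrable_const (b n)).add integrable_condExp).integrableOn) ?_
          exact ae_restrict_of_ae R1
        have h2 : ∫ ω in A, (b n +
            (Q[fun ω' => ∫ r in Ioi s ∩ timeSet T, β r * ψ (u n r ω') | ℱ s]) ω) ∂Q
            = b n * (Q A).toReal + ∫ ω in A,
              (Q[fun ω' => ∫ r in Ioi s ∩ timeSet T, β r * ψ (u n r ω') | ℱ s]) ω ∂Q := by
          rw [integral_add (integrable_const _).integrableOn integrable_condExp.integrableOn,
            setIntegral_const, smul_eq_mul, mul_comm, measureReal_def]
        have h3 : ∫ ω in A,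
            (Q[fun ω' => ∫ r in Ioi s ∩ timeSet T, β r * ψ (u n r ω') | ℱ s]) ω ∂Q
            = ∫ ω in A, (∫ r in Ioi s ∩ timeSet T, β r * ψ (u n r ω)) ∂Q :=
          setIntegral_condExp (ℱ.le s) (hZint s) (ℱ.mono hts _ hA_F)
        rw [h2, h3] at h1
        exact h1
      -- pass to ENNReal
      have hzs_eq : ENNReal.ofReal (∫ ω in A, u n s ω ∂Q) = z s := by
        rw [hzdef]
        simp only
        rw [ofReal_integral_eq_lintegral_ofReal ((hXint s hs).integrableOn)
          (ae_of_all _ (fun ω => hu_nonneg n s ω))]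
      -- main estimate on the conditional-expectation term
      have hZs_bound : ENNReal.ofReal (∫ ω in A, (∫ r in Ioi s ∩ timeSet T,
            β r * ψ (u n r ω)) ∂Q)
          ≤ k_e * (ν (Ioi s) * Q A + ∫⁻ r in Ioi s, z r ∂ν) := by
        have e1 : ENNReal.ofReal (∫ ω in A, (∫ r in Ioi s ∩ timeSet T,
              β r * ψ (u n r ω)) ∂Q)
            ≤ ∫⁻ ω in A, ENNReal.ofReal (∫ r in Ioi s ∩ timeSet T, β r * ψ (u n r ω)) ∂Q := by
          refine ofReal_int_le _ _ (ae_of_all _ (fun ω => ?_))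
          show 0 ≤ ∫ r in Ioi s ∩ timeSet T, β r * ψ (u n r ω)
          rw [hZeq s ω]
          exact integral_nonneg (fun r => hG_nonneg _)
        have e2 : ∀ ω, ENNReal.ofReal (∫ r in Ioi s ∩ timeSet T, β r * ψ (u n r ω))
            ≤ ∫⁻ r in Ioi s ∩ timeSet T, ENNReal.ofReal (G (r, ω)) ∂volume := by
          intro ω
          rw [hZeq s ω]
          exact ofReal_int_le _ _ (ae_of_all _ (fun r => hG_nonneg _))
        have e3 : ∫⁻ ω in A, (∫⁻ r in Ioi s ∩ timeSet T,
              ENNReal.ofReal (G (r, ω)) ∂volume) ∂Q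
            = ∫⁻ r in Ioi s ∩ timeSet T, (∫⁻ ω in A, ENNReal.ofReal (G (r, ω)) ∂Q) ∂volume := by
          refine lintegral_lintegral_swap ?_
          exact ((ENNReal.measurable_ofReal.comp hG_meas).comp measurable_swap).aemeasurable
        have e5 : ∀ r : ℝ, ∫⁻ ω in A, ENNReal.ofReal (β' r) *
              (k_e * (1 + ENNReal.ofReal (u n r ω))) ∂Q
            = ENNReal.ofReal (β' r) * (k_e * (Q A + z r)) := by
          intro r
          have hgm : Measurable (fun ω : Ω => ENNReal.ofReal (u n r ω)) :=
            (hU.measurable.comp measurable_prodMk_left).ennreal_ofReal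
          rw [lintegral_const_mul _ ((hgm.const_add 1).const_mul _),
            lintegral_const_mul _ (hgm.const_add 1),
            lintegral_add_left measurable_const, lintegral_one,
            Measure.restrict_apply_univ]
        have e6 : ∫⁻ r in Ioi s ∩ timeSet T,
              ENNReal.ofReal (β' r) * (k_e * (Q A + z r)) ∂volume
            = k_e * (ν (Ioi s) * Q A + ∫⁻ r in Ioi s, z r ∂ν) := by
          have hrw : ∀ r : ℝ, ENNReal.ofReal (β' r) * (k_e * (Q A + z r))
              = k_e * (ENNReal.ofReal (β' r) * Q A + ENNReal.ofReal (β' r) * z r) := by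
            intro r
            ring
          rw [lintegral_congr hrw,
            lintegral_const_mul _ (f := fun r => ENNReal.ofReal (β' r) * Q A + ENNReal.ofReal (β' r) * z r)
              (((hβ'meas.ennreal_ofReal).mul_const _).add
              ((hβ'meas.ennreal_ofReal).mul hz_meas)),
            lintegral_add_left ((hβ'meas.ennreal_ofReal).mul_const _),
            lintegral_mul_const _ hβ'meas.ennreal_ofReal,
            ← hν_apply (Ioi s) measurableSet_Ioi, ← hwd s z hz_meas]
        calc ENNReal.ofReal (∫ ω in A, (∫ r in Ioi s ∩ timeSet T, β r * ψ (u n r ω)) ∂Q)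
            ≤ ∫⁻ ω in A, ENNReal.ofReal (∫ r in Ioi s ∩ timeSet T,
                β r * ψ (u n r ω)) ∂Q := e1
          _ ≤ ∫⁻ ω in A, (∫⁻ r in Ioi s ∩ timeSet T,
                ENNReal.ofReal (G (r, ω)) ∂volume) ∂Q := lintegral_mono e2
          _ = ∫⁻ r in Ioi s ∩ timeSet T,
                (∫⁻ ω in A, ENNReal.ofReal (G (r, ω)) ∂Q) ∂volume := e3
          _ ≤ ∫⁻ r in Ioi s ∩ timeSet T,
                ENNReal.ofReal (β' r) * (k_e * (Q A + z r)) ∂volume := by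
              refine lintegral_mono (fun r => ?_)
              refine le_trans (lintegral_mono (fun ω => hG_ofReal_le (r, ω))) ?_
              exact le_of_eq (e5 r)
          _ = k_e * (ν (Ioi s) * Q A + ∫⁻ r in Ioi s, z r ∂ν) := e6
      -- combine
      calc z s = ENNReal.ofReal (∫ ω in A, u n s ω ∂Q) := hzs_eq.symm
        _ ≤ ENNReal.ofReal (b n * (Q A).toReal
              + ∫ ω in A, (∫ r in Ioi s ∩ timeSet T, β r * ψ (u n r ω)) ∂Q) :=
            ENNReal.ofReal_le_ofReal R2
        _ ≤ ENNReal.ofReal (b n * (Q A).toReal)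
              + ENNReal.ofReal (∫ ω in A, (∫ r in Ioi s ∩ timeSet T,
                  β r * ψ (u n r ω)) ∂Q) := ENNReal.ofReal_add_le
        _ ≤ ENNReal.ofReal (b n) * Q A
              + k_e * (ν (Ioi s) * Q A + ∫⁻ r in Ioi s, z r ∂ν) := by
            refine add_le_add (le_of_eq ?_) hZs_bound
            rw [ENNReal.ofReal_mul (hb_nonneg n hn), ENNReal.ofReal_toReal (measure_ne_top Q A)]
        _ ≤ ENNReal.ofReal (b n) * Q A + k_e * (ENNReal.ofReal B * Q A)
              + k_e * ∫⁻ r in Ioi s, z r ∂ν := by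
            rw [mul_add, ← add_assoc]
            exact add_le_add (add_le_add le_rfl
              (mul_le_mul_right (mul_le_mul_left (hν_le s) _) _)) le_rfl
        _ = c_e + k_e * ∫⁻ r in Ioi s, z r ∂ν := by
            rw [hcedef, add_mul, mul_assoc]
    -- apply the Gronwall-type iteration
    have hiter := gronwall_iter ν hν_atom (timeSet T) hν_E t z hz_meas M_e c_e k_e
      (fun s _ hs => hz_le s hs) hrec
    -- pass to the limit m → ∞
    have hterm_le : ∀ j : ℕ, k_e ^ j * ν (Ioi t) ^ j / (j.factorial : ℝ≥0∞)
        ≤ ENNReal.ofReal ((k * B) ^ j / (j.factorial : ℝ)) := by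
      intro j
      have h1 : k_e ^ j * ν (Ioi t) ^ j / (j.factorial : ℝ≥0∞)
          ≤ k_e ^ j * ENNReal.ofReal B ^ j / (j.factorial : ℝ≥0∞) := by
        gcongr
        exact hν_le t
      refine h1.trans (le_of_eq ?_)
      rw [hkedef, ← ENNReal.ofReal_pow (le_of_lt hk), ← ENNReal.ofReal_pow hB_nonneg,
        ← ENNReal.ofReal_mul (by positivity), ← mul_pow,
        ENNReal.ofReal_div_of_pos (by positivity), ENNReal.ofReal_natCast]
    have hle1 : ∀ m : ℕ, z t ≤ c_e * ENNReal.ofReal (Real.exp (k * B))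
        + M_e * ENNReal.ofReal ((k * B) ^ m / (m.factorial : ℝ)) := by
      intro m
      refine (hiter m t le_rfl ht).trans (add_le_add ?_ ?_)
      · refine mul_le_mul_right ?_ _
        calc ∑ j ∈ Finset.range m, k_e ^ j * ν (Ioi t) ^ j / (j.factorial : ℝ≥0∞)
            ≤ ∑ j ∈ Finset.range m, ENNReal.ofReal ((k * B) ^ j / (j.factorial : ℝ)) :=
              Finset.sum_le_sum (fun j _ => hterm_le j)
          _ = ENNReal.ofReal (∑ j ∈ Finset.range m, (k * B) ^ j / (j.factorial : ℝ)) :=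
              (ENNReal.ofReal_sum_of_nonneg (fun j _ => by positivity)).symm
          _ ≤ ENNReal.ofReal (Real.exp (k * B)) :=
              ENNReal.ofReal_le_ofReal (Real.sum_le_exp_of_nonneg (by positivity) m)
      · rw [mul_assoc, mul_div_assoc]
        exact mul_le_mul_right (by simpa [mul_div_assoc] using hterm_le m) _
    have hz_t : z t ≤ c_e * ENNReal.ofReal (Real.exp (k * B)) := by
      have h0 : Tendsto (fun m : ℕ => ((k * B) ^ m / (m.factorial : ℝ))) atTop (𝓝 0) :=
        FloorSemiring.tendsto_pow_div_factorial_atTop (k * B)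
      have h1 : Tendsto (fun m : ℕ => ENNReal.ofReal ((k * B) ^ m / (m.factorial : ℝ)))
          atTop (𝓝 0) := by
        rw [← ENNReal.ofReal_zero]
        exact (ENNReal.continuous_ofReal.tendsto 0).comp h0
      have h2 : Tendsto (fun m : ℕ => M_e * ENNReal.ofReal ((k * B) ^ m / (m.factorial : ℝ)))
          atTop (𝓝 0) := by
        have h3 : Tendsto (fun m : ℕ => M_e * ENNReal.ofReal ((k * B) ^ m / (m.factorial : ℝ)))
            atTop (𝓝 (M_e * 0)) := ENNReal.Tendsto.const_mul h1 (Or.inr hM_lt.ne)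
        simpa using h3
      have h3 : Tendsto (fun m : ℕ => c_e * ENNReal.ofReal (Real.exp (k * B))
          + M_e * ENNReal.ofReal ((k * B) ^ m / (m.factorial : ℝ))) atTop
          (𝓝 (c_e * ENNReal.ofReal (Real.exp (k * B)))) := by
        simpa using tendsto_const_nhds.add h2
      exact ge_of_tendsto' h3 hle1
    -- back to real integrals
    have hzt_real : ∫ ω in A, u n t ω ∂Q = (z t).toReal := by
      rw [integral_eq_lintegral_of_nonneg_ae (ae_of_all _ (fun ω => hu_nonneg n t ω))
        ((hXint t ht).aestronglyMeasurable.restrict)]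
    have hce_ne : c_e ≠ ⊤ := by
      rw [hcedef]
      exact ENNReal.mul_ne_top
        (by exact ENNReal.add_ne_top.mpr ⟨ENNReal.ofReal_ne_top,
          ENNReal.mul_ne_top ENNReal.ofReal_ne_top ENNReal.ofReal_ne_top⟩)
        (measure_ne_top Q A)
    have hbound : ∫ ω in A, u n t ω ∂Q ≤ tgt * (Q A).toReal := by
      rw [hzt_real]
      have h4 : (z t).toReal ≤ (c_e * ENNReal.ofReal (Real.exp (k * B))).toReal :=
        ENNReal.toReal_mono (ENNReal.mul_ne_top hce_ne ENNReal.ofReal_ne_top) hz_t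
      refine h4.trans ?_
      rw [ENNReal.toReal_mul, hcedef, ENNReal.toReal_mul, ENNReal.toReal_add
          ENNReal.ofReal_ne_top (ENNReal.mul_ne_top ENNReal.ofReal_ne_top ENNReal.ofReal_ne_top),
        ENNReal.toReal_mul, ENNReal.toReal_ofReal (hb_nonneg n hn),
        ENNReal.toReal_ofReal (le_of_lt hk), ENNReal.toReal_ofReal hB_nonneg,
        ENNReal.toReal_ofReal (le_of_lt (Real.exp_pos _))]
      have h5 : (b n + k * B) * (Q A).toReal * Real.exp (k * B)
          ≤ (b 1 + k * B) * Real.exp (k * B) * (Q A).toReal := by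
        have h6 : b n + k * B ≤ b 1 + k * B := by
          have := hb_le n hn
          linarith
        have h7 : (0 : ℝ) ≤ (Q A).toReal := ENNReal.toReal_nonneg
        have h8 := mul_le_mul_of_nonneg_right h6
          (mul_nonneg (le_of_lt (Real.exp_pos (k * B))) h7)
        nlinarith [h8]
      calc (b n + k * B) * (Q A).toReal * Real.exp (k * B)
          ≤ (b 1 + k * B) * Real.exp (k * B) * (Q A).toReal := h5
        _ = tgt * (Q A).toReal := by rw [htgtdef]
    -- conclude Q A = 0
    have hQA : Q A = 0 := by
      have hint_t : IntegrableOn (u n t) A Q := (hXint t ht).integrableOn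
      have heq0 : ∫ ω in A, (u n t ω - tgt) ∂Q = 0 := by
        have hup : ∫ ω in A, (u n t ω - tgt) ∂Q
            = (∫ ω in A, u n t ω ∂Q) - tgt * (Q A).toReal := by
          rw [integral_sub hint_t (integrable_const _).integrableOn, setIntegral_const,
            smul_eq_mul, mul_comm, measureReal_def]
        have hle : ∫ ω in A, (u n t ω - tgt) ∂Q ≤ 0 := by
          rw [hup]
          linarith [hbound]
        have hge : 0 ≤ ∫ ω in A, (u n t ω - tgt) ∂Q := by
          refine setIntegral_nonneg hA (fun ω hω => ?_)
          have : tgt < u n t ω := hω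
          linarith
        linarith
      have hae0 := (integral_eq_zero_iff_of_nonneg_ae ?_ ?_).mp heq0
      case refine_2 =>
        exact hint_t.sub (integrable_const _).integrableOn
      case refine_1 =>
        filter_upwards [ae_restrict_mem hA] with ω hω
        have : tgt < u n t ω := hω
        simp only [Pi.zero_apply]
        linarith
      have hnull : (Q.restrict A) {ω | ¬ (u n t ω - tgt = 0)} = 0 := by
        rw [Filter.EventuallyEq, ae_iff] at hae0
        simpa using hae0
      rw [← Measure.restrict_apply_self]
      refine measure_mono_null (fun ω hω => ?_) hnull
      have : tgt < u n t ω := hω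
      simp only [mem_setOf_eq]
      intro hcontra
      nlinarith
    have hPA : P A = 0 := (hPn_equiv n).2 hQA
    rw [ae_iff]
    have hset : {ω | ¬ u n t ω ≤ (b 1 + k * B) * Real.exp (k * B)} = A := by
      ext ω
      simp [hAdef, htgtdef, not_le]
    rw [hset]
    exact hPA
  refine ae_all_iff.mpr (fun n => ?_)
  by_cases hn : 1 ≤ n
  · exact (key n hn).mono (fun ω h _ => h)
  · exact ae_of_all _ (fun ω h => absurd h hn)

end
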